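/- Let 1 < p, q < ∞ with 1/p + 1/q ≥ 1, and denote by (eₙ) and (e′ₙ) the unit vector bases of ℓp and ℓq. Then the sequence (eₙ ⊗ e′ₙ) in the projective tensor product ℓp ⊗̂π ℓq is equivalent to the unit vector basis of ℓ1; that is, there is a constant C > 0 such that C Σ |aₙ| ≤ ‖Σ aₙ (eₙ ⊗ e′ₙ)‖π ≤ Σ |aₙ| for all finitely supported scalar sequences (aₙ). -/

import Mathlib

set_option maxHeartbeats 1000000


open Filter Topology NormedSpace
open scoped ENNReal NNReal

/-- `Z`, together with the continuous bilinear map `m`, is (a realization of) the projective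
tensor product `X ⊗̂π Y`: the span of elementary tensors is dense, and every continuous bilinear
map into a Banach space lifts to a continuous linear map on `Z` with the same norm. -/
structure IsProjTensorProduct (X Y Z : Type*) [NormedAddCommGroup X] [NormedSpace ℝ X]
    [NormedAddCommGroup Y] [NormedSpace ℝ Y] [NormedAddCommGroup Z] [NormedSpace ℝ Z]
    (m : X →L[ℝ] Y →L[ℝ] Z) : Prop where
  dense_span : Dense (Submodule.span ℝ {z : Z | ∃ x y, m x y = z} : Set Z)
  lift : ∀ (W : Type) [NormedAddCommGroup W] [NormedSpace ℝ W] [CompleteSpace W]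
    (B : X →L[ℝ] Y →L[ℝ] W), ∃ T : Z →L[ℝ] W, ‖T‖ = ‖B‖ ∧ ∀ x y, T (m x y) = B x y

/-- A set is relatively weakly compact if its closure in the weak topology is weakly compact. -/
def RelWeakCompact (X : Type*) [SeminormedAddCommGroup X] [NormedSpace ℝ X] (A : Set X) : Prop :=
  IsCompact (closure ((toWeakSpace ℝ X) '' A))

/-- A set is relatively norm compact if its norm closure is compact. -/
def RelNormCompact (X : Type*) [SeminormedAddCommGroup X] [NormedSpace ℝ X] (A : Set X) : Prop :=
  IsCompact (closure A)

/-- A sequence is weakly Cauchy if every continuous functional sends it to a convergent sequence. -/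
def WeaklyCauchySeq {X : Type*} [SeminormedAddCommGroup X] [NormedSpace ℝ X] (x : ℕ → X) : Prop :=
  ∀ f : X →L[ℝ] ℝ, ∃ l : ℝ, Tendsto (fun n => f (x n)) atTop (nhds l)

/-- A sequence is weakly null if it converges to `0` in the weak topology. -/
def WeaklyNullSeq {X : Type*} [SeminormedAddCommGroup X] [NormedSpace ℝ X] (x : ℕ → X) : Prop :=
  ∀ f : X →L[ℝ] ℝ, Tendsto (fun n => f (x n)) atTop (nhds 0)

/-- A set is weakly precompact if every sequence in it has a weakly Cauchy subsequence. -/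
def WeaklyPrecompact {X : Type*} [SeminormedAddCommGroup X] [NormedSpace ℝ X] (A : Set X) : Prop :=
  ∀ x : ℕ → X, (∀ n, x n ∈ A) → ∃ φ : ℕ → ℕ, StrictMono φ ∧ WeaklyCauchySeq (x ∘ φ)

/-- A (weakly) compact operator maps the closed unit ball to a relatively (weakly) compact set. -/
def WeaklyCompactOp {X Y : Type*} [SeminormedAddCommGroup X] [NormedSpace ℝ X]
    [SeminormedAddCommGroup Y] [NormedSpace ℝ Y] (T : X →L[ℝ] Y) : Prop :=
  RelWeakCompact Y (T '' Metric.closedBall 0 1)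

private lemma sign_mul_self_eq_abs (a : ℝ) : a * Real.sign a = |a| := by
  rcases lt_trichotomy a 0 with h | h | h
  · rw [Real.sign_of_neg h, abs_of_neg h]; ring
  · simp [h]
  · rw [Real.sign_of_pos h, abs_of_pos h]; ring

private lemma abs_sign_le_one (a : ℝ) : |Real.sign a| ≤ 1 := by
  rcases lt_trichotomy a 0 with h | h | h
  · simp [Real.sign_of_neg h]
  · simp [h]
  · simp [Real.sign_of_pos h]

private lemma nnreal_rpow_sum_le (s : Finset ℕ) (v : ℕ → ℝ≥0) {r : ℝ} (hr : 0 < r)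
    (hr1 : r ≤ 1) : (∑ n ∈ s, v n) ^ r ≤ ∑ n ∈ s, v n ^ r := by
  classical
  induction s using Finset.induction_on with
  | empty => simp [NNReal.zero_rpow hr.ne']
  | insert _ _ hns ih =>
      rw [Finset.sum_insert hns, Finset.sum_insert hns]
      exact (NNReal.rpow_add_le_add_rpow _ _ hr.le hr1).trans (by gcongr)

private lemma nnreal_sum_rpow_mono (s : Finset ℕ) (v : ℕ → ℝ≥0) {a b : ℝ}
    (ha : 0 < a) (hab : a ≤ b) :
    (∑ n ∈ s, v n ^ b) ^ (1 / b) ≤ (∑ n ∈ s, v n ^ a) ^ (1 / a) := by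
  have hb : 0 < b := ha.trans_le hab
  have h1 : (∑ n ∈ s, v n ^ b) ^ (a / b) ≤ ∑ n ∈ s, v n ^ a := by
    calc (∑ n ∈ s, v n ^ b) ^ (a / b) ≤ ∑ n ∈ s, (v n ^ b) ^ (a / b) :=
          nnreal_rpow_sum_le s _ (div_pos ha hb) (div_le_one_of_le₀ hab hb.le)
      _ = ∑ n ∈ s, v n ^ a := by
          refine Finset.sum_congr rfl fun n _ => ?_
          rw [← NNReal.rpow_mul]
          congr 1
          field_simp
  calc (∑ n ∈ s, v n ^ b) ^ (1 / b) = ((∑ n ∈ s, v n ^ b) ^ (a / b)) ^ (1 / a) := by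
        rw [← NNReal.rpow_mul]; congr 1; field_simp
    _ ≤ (∑ n ∈ s, v n ^ a) ^ (1 / a) := NNReal.rpow_le_rpow h1 (by positivity)

private lemma real_sum_rpow_mono (s : Finset ℕ) (x : ℕ → ℝ) {a b : ℝ}
    (ha : 0 < a) (hab : a ≤ b) :
    (∑ n ∈ s, |x n| ^ b) ^ (1 / b) ≤ (∑ n ∈ s, |x n| ^ a) ^ (1 / a) := by
  have key := NNReal.coe_le_coe.2 (nnreal_sum_rpow_mono s (fun n => Real.nnabs (x n)) ha hab)
  have h1 : ∀ r : ℝ, ((∑ n ∈ s, (Real.nnabs (x n)) ^ r : ℝ≥0) : ℝ) = ∑ n ∈ s, |x n| ^ r := by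
    intro r
    push_cast
    rfl
  rwa [NNReal.coe_rpow, NNReal.coe_rpow, h1, h1] at key

theorem stmt12 (p q : ℝ≥0∞) [Fact (1 ≤ p)] [Fact (1 ≤ q)]
    (hp : 1 < p) (hp' : p ≠ ⊤) (hq : 1 < q) (hq' : q ≠ ⊤) (hpq : 1 ≤ 1 / p + 1 / q)
    {Z : Type*} [NormedAddCommGroup Z] [NormedSpace ℝ Z] [CompleteSpace Z]
    (m : lp (fun _ : ℕ => ℝ) p →L[ℝ] lp (fun _ : ℕ => ℝ) q →L[ℝ] Z)
    (hm : IsProjTensorProduct (lp (fun _ : ℕ => ℝ) p) (lp (fun _ : ℕ => ℝ) q) Z m) :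
    ∃ C : ℝ, 0 < C ∧ ∀ (s : Finset ℕ) (a : ℕ → ℝ),
      C * ∑ n ∈ s, |a n| ≤ ‖∑ n ∈ s, a n • m (lp.single p n 1) (lp.single q n 1)‖ ∧
      ‖∑ n ∈ s, a n • m (lp.single p n 1) (lp.single q n 1)‖ ≤ ∑ n ∈ s, |a n| := by
  classical
  have hp0 : p ≠ 0 := (zero_lt_one.trans hp).ne'
  have hq0 : q ≠ 0 := (zero_lt_one.trans hq).ne'
  have hpr1 : 1 < p.toReal := by
    rw [← ENNReal.toReal_one]
    exact (ENNReal.toReal_lt_toReal (by simp) hp').mpr hp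
  have hqr1 : 1 < q.toReal := by
    rw [← ENNReal.toReal_one]
    exact (ENNReal.toReal_lt_toReal (by simp) hq').mpr hq
  have hpr0 : 0 < p.toReal := lt_trans one_pos hpr1
  have hqr0 : 0 < q.toReal := lt_trans one_pos hqr1
  -- the real exponent inequality
  have hinv : 1 ≤ (p.toReal)⁻¹ + (q.toReal)⁻¹ := by
    have h1p : (1 : ℝ≥0∞) / p ≠ ⊤ := by rw [one_div]; exact ENNReal.inv_ne_top.2 hp0
    have h1q : (1 : ℝ≥0∞) / q ≠ ⊤ := by rw [one_div]; exact ENNReal.inv_ne_top.2 hq0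
    have hfin : 1 / p + 1 / q ≠ ⊤ := ENNReal.add_ne_top.2 ⟨h1p, h1q⟩
    have h := ENNReal.toReal_mono hfin hpq
    rw [ENNReal.toReal_add h1p h1q, ENNReal.toReal_one, ENNReal.toReal_div, ENNReal.toReal_div,
      ENNReal.toReal_one] at h
    simpa [one_div] using h
  set qc := Real.conjExponent q.toReal with hqc_def
  have hqco : q.toReal.HolderConjugate qc := Real.HolderConjugate.conjExponent hqr1
  have hprqc : p.toReal ≤ qc := by
    have h2 := hqco.inv_add_inv_eq_one
    have h1 : qc⁻¹ ≤ (p.toReal)⁻¹ := by linarith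
    exact (inv_le_inv₀ hqco.symm.pos hpr0).mp h1
  -- key norm bound for diagonal bilinear forms
  have key_bound : ∀ (c : ℕ → ℝ), (∀ n, |c n| ≤ 1) → ∀ (s : Finset ℕ)
      (x : lp (fun _ : ℕ => ℝ) p) (y : lp (fun _ : ℕ => ℝ) q),
      |∑ n ∈ s, c n * x n * y n| ≤ 1 * ‖x‖ * ‖y‖ := by
    intro c hc s x y
    have step1 : |∑ n ∈ s, c n * x n * y n| ≤ ∑ n ∈ s, |x n| * |y n| := by
      refine (Finset.abs_sum_le_sum_abs _ _).trans (Finset.sum_le_sum fun n _ => ?_)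
      rw [abs_mul, abs_mul]
      have h := mul_le_mul_of_nonneg_right
        (mul_le_mul_of_nonneg_right (hc n) (abs_nonneg (x n))) (abs_nonneg (y n))
      simpa using h
    have step2 : ∑ n ∈ s, |x n| * |y n| ≤
        (∑ n ∈ s, |x n| ^ qc) ^ (1 / qc) * (∑ n ∈ s, |y n| ^ q.toReal) ^ (1 / q.toReal) := by
      have h := Real.inner_le_Lp_mul_Lq s (fun n => |x n|) (fun n => |y n|) hqco.symm
      simpa [abs_abs] using h
    have step3 : (∑ n ∈ s, |x n| ^ qc) ^ (1 / qc) ≤ ‖x‖ := by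
      refine (real_sum_rpow_mono s _ hpr0 hprqc).trans ?_
      have h := lp.sum_rpow_le_norm_rpow hpr0 x s
      have h2 : (∑ n ∈ s, |x n| ^ p.toReal) ^ (1 / p.toReal) ≤ (‖x‖ ^ p.toReal) ^ (1 / p.toReal) := by
        refine Real.rpow_le_rpow (by positivity) ?_ (by positivity)
        simpa [Real.norm_eq_abs] using h
      rwa [← Real.rpow_mul (norm_nonneg x), mul_one_div, div_self hpr0.ne', Real.rpow_one] at h2
    have step4 : (∑ n ∈ s, |y n| ^ q.toReal) ^ (1 / q.toReal) ≤ ‖y‖ := by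
      have h := lp.sum_rpow_le_norm_rpow hqr0 y s
      have h2 : (∑ n ∈ s, |y n| ^ q.toReal) ^ (1 / q.toReal) ≤
          (‖y‖ ^ q.toReal) ^ (1 / q.toReal) := by
        refine Real.rpow_le_rpow (by positivity) ?_ (by positivity)
        simpa [Real.norm_eq_abs] using h
      rwa [← Real.rpow_mul (norm_nonneg y), mul_one_div, div_self hqr0.ne', Real.rpow_one] at h2
    calc |∑ n ∈ s, c n * x n * y n| ≤ ∑ n ∈ s, |x n| * |y n| := step1
      _ ≤ (∑ n ∈ s, |x n| ^ qc) ^ (1 / qc) * (∑ n ∈ s, |y n| ^ q.toReal) ^ (1 / q.toReal) := step2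
      _ ≤ ‖x‖ * ‖y‖ := by
          refine mul_le_mul step3 step4 (by positivity) (norm_nonneg x)
      _ = 1 * ‖x‖ * ‖y‖ := by ring
  -- bound on elementary tensors via duality
  have hmle : ∀ x y, ‖m x y‖ ≤ ‖x‖ * ‖y‖ := by
    intro x y
    refine norm_le_dual_bound ℝ _ (by positivity) fun f => ?_
    set B := (ContinuousLinearMap.compL ℝ (lp (fun _ : ℕ => ℝ) q) Z ℝ f).comp m with hB
    obtain ⟨T, hT, hTm⟩ := hm.lift ℝ B
    have hBapp : ∀ u v, B u v = f (m u v) := fun u v => by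
      simp [hB]
    have hTf : T = f := by
      refine ContinuousLinearMap.ext_on hm.dense_span ?_
      rintro z ⟨x', y', rfl⟩
      rw [hTm x' y', hBapp]
    calc ‖f (m x y)‖ = ‖B x y‖ := by rw [hBapp]
      _ ≤ ‖B‖ * ‖x‖ * ‖y‖ := B.le_opNorm₂ x y
      _ = ‖x‖ * ‖y‖ * ‖f‖ := by rw [← hT, hTf]; ring
  have hsp : ∀ n : ℕ, ‖lp.single (E := fun _ : ℕ => ℝ) p n 1‖ = 1 := fun n => by
    simpa using lp.norm_single (E := fun _ : ℕ => ℝ) (zero_lt_one.trans hp) n (1 : ℝ)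
  have hsq : ∀ n : ℕ, ‖lp.single (E := fun _ : ℕ => ℝ) q n 1‖ = 1 := fun n => by
    simpa using lp.norm_single (E := fun _ : ℕ => ℝ) (zero_lt_one.trans hq) n (1 : ℝ)
  refine ⟨1, one_pos, fun s a => ?_⟩
  set e : ℕ → Z := fun n => m (lp.single p n 1) (lp.single q n 1) with he
  have hub : ‖∑ n ∈ s, a n • e n‖ ≤ ∑ n ∈ s, |a n| := by
    refine (norm_sum_le _ _).trans (Finset.sum_le_sum fun n _ => ?_)
    rw [norm_smul, Real.norm_eq_abs]
    have h1 : ‖e n‖ ≤ 1 := by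
      refine (hmle _ _).trans ?_
      rw [hsp n, hsq n]; norm_num
    calc |a n| * ‖e n‖ ≤ |a n| * 1 := mul_le_mul_of_nonneg_left h1 (abs_nonneg _)
      _ = |a n| := mul_one _
  -- lower bound via a diagonal bilinear form
  set c : ℕ → ℝ := fun n => if n ∈ s then Real.sign (a n) else 0 with hc_def
  have hc : ∀ n, |c n| ≤ 1 := fun n => by
    by_cases h : n ∈ s
    · simpa [hc_def, h] using abs_sign_le_one (a n)
    · simp [hc_def, h]
  set Lb : lp (fun _ : ℕ => ℝ) p →ₗ[ℝ] lp (fun _ : ℕ => ℝ) q →ₗ[ℝ] ℝ :=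
    LinearMap.mk₂ ℝ (fun x y => ∑ n ∈ s, c n * x n * y n)
      (fun x x' y => by
        rw [← Finset.sum_add_distrib]
        refine Finset.sum_congr rfl fun n _ => ?_
        have hx : (x + x') n = x n + x' n := by rw [lp.coeFn_add]; rfl
        rw [hx]; ring)
      (fun r x y => by
        rw [Finset.smul_sum]
        refine Finset.sum_congr rfl fun n _ => ?_
        have hx : (r • x) n = r * x n := by rw [lp.coeFn_smul]; rfl
        rw [hx, smul_eq_mul]; ring)
      (fun x y y' => by
        rw [← Finset.sum_add_distrib]
        refine Finset.sum_congr rfl fun n _ => ?_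
        have hy : (y + y') n = y n + y' n := by rw [lp.coeFn_add]; rfl
        rw [hy]; ring)
      (fun r x y => by
        rw [Finset.smul_sum]
        refine Finset.sum_congr rfl fun n _ => ?_
        have hy : (r • y) n = r * y n := by rw [lp.coeFn_smul]; rfl
        rw [hy, smul_eq_mul]; ring) with hLb
  set B : lp (fun _ : ℕ => ℝ) p →L[ℝ] lp (fun _ : ℕ => ℝ) q →L[ℝ] ℝ :=
    LinearMap.mkContinuous₂ Lb 1 (fun x y => by
      have h := key_bound c hc s x y
      simpa [hLb, LinearMap.mk₂_apply, Real.norm_eq_abs] using h) with hBdef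
  obtain ⟨T, hT, hTm⟩ := hm.lift ℝ B
  have hTnorm : ‖T‖ ≤ 1 := by
    rw [hT]
    exact LinearMap.mkContinuous₂_norm_le _ zero_le_one _
  have hBe : ∀ n ∈ s, B (lp.single p n 1) (lp.single q n 1) = c n := by
    intro n hn
    have hBxy : B (lp.single p n 1) (lp.single q n 1) =
        ∑ k ∈ s, c k * lp.single (E := fun _ : ℕ => ℝ) p n 1 k *
          lp.single (E := fun _ : ℕ => ℝ) q n 1 k := by
      simp [hBdef, hLb, LinearMap.mk₂_apply]
    rw [hBxy, Finset.sum_eq_single_of_mem n hn]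
    · rw [lp.single_apply_self, lp.single_apply_self]; ring
    · intro k _ hkn
      rw [lp.single_apply_ne p n _ hkn]
      ring
  have hTv : T (∑ n ∈ s, a n • e n) = ∑ n ∈ s, |a n| := by
    rw [map_sum]
    refine Finset.sum_congr rfl fun n hn => ?_
    have h1 : T (e n) = c n := by
      simp only [he]
      rw [hTm]
      exact hBe n hn
    rw [map_smul, h1, smul_eq_mul]
    simp only [hc_def, if_pos hn]
    exact sign_mul_self_eq_abs (a n)
  have hlb : ∑ n ∈ s, |a n| ≤ ‖∑ n ∈ s, a n • e n‖ := by
    calc ∑ n ∈ s, |a n| = T (∑ n ∈ s, a n • e n) := hTv.symm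
      _ ≤ ‖T (∑ n ∈ s, a n • e n)‖ := le_abs_self _
      _ ≤ ‖T‖ * ‖∑ n ∈ s, a n • e n‖ := T.le_opNorm _
      _ ≤ 1 * ‖∑ n ∈ s, a n • e n‖ := mul_le_mul_of_nonneg_right hTnorm (norm_nonneg _)
      _ = ‖∑ n ∈ s, a n • e n‖ := one_mul _
  exact ⟨by simpa using hlb, hub⟩
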